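/- For every natural number i > 0, f(2 / (3^i - 1)) = 2^(i-1) / (3^i - 2^i). -/
import Mathlib


open intervalIntegral Set

theorem bourbaki_stmt (f : ℝ → ℝ)
    (hcont : ContinuousOn f (Set.Icc 0 1))
    (h0 : f 0 = 0) (h1 : f 1 = 1)
    (hw1 : ∀ x ∈ Set.Icc (0:ℝ) 1, f (x / 3) = (2/3) * f x)
    (hw2 : ∀ x ∈ Set.Icc (0:ℝ) 1, f ((2 - x) / 3) = (1/3) * (1 + f x))
    (hw3 : ∀ x ∈ Set.Icc (0:ℝ) 1, f ((2 + x) / 3) = 1/3 + (2/3) * f x) :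
    ∀ i : ℕ, 0 < i → f (2 / (3 ^ i - 1)) = 2 ^ (i - 1) / (3 ^ i - 2 ^ i) := by
  intro i hi
  obtain ⟨m, rfl⟩ : ∃ m, i = m + 1 := ⟨i - 1, (Nat.succ_pred_eq_of_pos hi).symm⟩
  have h3m : (1:ℝ) ≤ 3 ^ m := one_le_pow₀ (by norm_num)
  set a : ℝ := 3 ^ (m + 1) - 1 with ha
  have hapos : (0:ℝ) < a := by
    have h3 : (3:ℝ) ^ (m + 1) = 3 * 3 ^ m := by ring
    rw [ha, h3]; linarith
  set x : ℝ := 2 / a with hx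
  have hxmem : ∀ k, k ≤ m → 3 ^ k * x ∈ Set.Icc (0:ℝ) 1 := by
    intro k hk
    have hkm : (3:ℝ) ^ k ≤ 3 ^ m := pow_le_pow_right₀ (by norm_num) hk
    constructor
    · positivity
    · have e : (3:ℝ) ^ k * x = (3 ^ k * 2) / a := by rw [hx]; ring
      rw [e, div_le_one hapos, ha]
      have h3 : (3:ℝ) ^ (m + 1) = 3 * 3 ^ m := by ring
      rw [h3]; linarith
  have hxm : x ∈ Set.Icc (0:ℝ) 1 := by simpa using hxmem 0 (Nat.zero_le m)
  have key : ∀ k, k ≤ m → f x = (2/3) ^ k * f (3 ^ k * x) := by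
    intro k
    induction k with
    | zero => intro _; simp
    | succ n ih =>
      intro hn
      have h1' := hw1 (3 ^ (n + 1) * x) (hxmem (n + 1) hn)
      have e : (3:ℝ) ^ (n + 1) * x / 3 = 3 ^ n * x := by ring
      rw [e] at h1'
      rw [ih (Nat.le_of_succ_le hn), h1']
      ring
  have e2 : (2 + x) / 3 = 3 ^ m * x := by
    rw [hx, ha]
    have hne : (3:ℝ) ^ (m + 1) - 1 ≠ 0 := by rw [← ha]; exact ne_of_gt hapos
    field_simp
    ring
  have hfin := key m le_rfl
  rw [← e2, hw3 x hxm] at hfin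
  have h32 : (0:ℝ) < 3 ^ (m + 1) - 2 ^ (m + 1) := by
    have : (2:ℝ) ^ (m + 1) < 3 ^ (m + 1) :=
      pow_lt_pow_left₀ (by norm_num) (by norm_num) (by omega)
    linarith
  have hmult : (2/3:ℝ) ^ m * 3 ^ m = 2 ^ m := by
    rw [div_pow]; field_simp
  show f x = 2 ^ (m + 1 - 1) / (3 ^ (m + 1) - 2 ^ (m + 1))
  rw [Nat.add_sub_cancel, eq_div_iff (ne_of_gt h32)]
  linear_combination (3 * (3:ℝ) ^ m) * hfin + (1 + 2 * f x) * hmult
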